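/- (Pettis theorem) Let G be a topological group and A ⊆ G a set with the Baire property (A = U Δ P with U open and P meager). If A is nonmeager, then A⁻¹A (respectively, A − A in the abelian additive case) contains an open neighborhood of the identity. -/

import Mathlib

open Pointwise Set

section Banach

variable {X : Type*} [TopologicalSpace X]

lemma aux_nd_mono {s t : Set X} (ht : IsNowhereDense t) (hst : s ⊆ t) : IsNowhereDense s :=
  eq_empty_of_subset_empty (ht ▸ interior_mono (closure_mono hst))

lemma aux_nd_meagre {s : Set X} (h : IsNowhereDense s) : IsMeagre s :=
  isMeagre_iff_countable_union_isNowhereDense.mpr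
    ⟨{s}, by simpa using h, countable_singleton s, by simp⟩

lemma aux_meagre_union {s t : Set X} (hs : IsMeagre s) (ht : IsMeagre t) :
    IsMeagre (s ∪ t) := by
  rw [IsMeagre, compl_union]; exact Filter.inter_mem hs ht

lemma aux_meagre_seq {s : Set X} (h : IsMeagre s) :
    ∃ f : ℕ → Set X, (∀ n, IsNowhereDense (f n)) ∧ s ⊆ ⋃ n, f n := by
  obtain ⟨S, hnd, hc, hsub⟩ := isMeagre_iff_countable_union_isNowhereDense.mp h
  rcases S.eq_empty_or_nonempty with rfl | hne
  · exact ⟨fun _ => ∅, fun _ => isNowhereDense_empty, by simpa using hsub⟩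
  · obtain ⟨f, rfl⟩ := hc.exists_eq_range hne
    exact ⟨f, fun n => hnd _ ⟨n, rfl⟩, by rwa [sUnion_range] at hsub⟩

/-- **Banach category theorem**: a union of open meagre sets is meagre. -/
theorem aux_banach_category {𝒰 : Set (Set X)} (h : ∀ U ∈ 𝒰, IsOpen U ∧ IsMeagre U) :
    IsMeagre (⋃₀ 𝒰) := by
  classical
  set 𝒱 : Set (Set X) := {V | IsOpen V ∧ V.Nonempty ∧ ∃ U ∈ 𝒰, V ⊆ U} with h𝒱
  set S : Set (Set (Set X)) := {F | F ⊆ 𝒱 ∧ F.PairwiseDisjoint id} with hS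
  obtain ⟨F, hFmax⟩ : ∃ F, Maximal (· ∈ S) F := by
    apply zorn_subset
    intro c hc hchain
    refine ⟨⋃₀ c, ⟨?_, ?_⟩, fun s hs => subset_sUnion_of_mem hs⟩
    · rintro V ⟨F, hFc, hVF⟩
      exact (hc hFc).1 hVF
    · rintro V ⟨F₁, hF₁, hVF₁⟩ W ⟨F₂, hF₂, hWF₂⟩ hVW
      rcases hchain.total hF₁ hF₂ with hle | hle
      · exact (hc hF₂).2 (hle hVF₁) hWF₂ hVW
      · exact (hc hF₁).2 hVF₁ (hle hWF₂) hVW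
  have hF𝒱 : F ⊆ 𝒱 := hFmax.1.1
  have hFdisj : F.PairwiseDisjoint id := hFmax.1.2
  have hFmeagre : ∀ V ∈ F, IsMeagre V := by
    intro V hV
    obtain ⟨_, _, U, hU𝒰, hVU⟩ := hF𝒱 hV
    exact (h U hU𝒰).2.mono hVU
  have key : ∀ V : Set X, ∃ f : ℕ → Set X,
      (∀ n, IsNowhereDense (f n) ∧ f n ⊆ V) ∧ (V ∈ F → V ⊆ ⋃ n, f n) := by
    intro V
    by_cases hV : V ∈ F
    · obtain ⟨f, hf1, hf2⟩ := aux_meagre_seq (hFmeagre V hV)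
      refine ⟨fun n => f n ∩ V, fun n => ⟨aux_nd_mono (hf1 n) inter_subset_left,
        inter_subset_right⟩, fun _ x hx => ?_⟩
      obtain ⟨_, ⟨n, rfl⟩, hn⟩ := hf2 hx
      exact mem_iUnion.mpr ⟨n, hn, hx⟩
    · exact ⟨fun _ => ∅, fun n => ⟨isNowhereDense_empty, empty_subset V⟩,
        fun hVF => absurd hVF hV⟩
  choose g hg1 hg2 using key
  set T : Set X := ⋃₀ F with hT
  have hTopen : IsOpen T := isOpen_sUnion fun V hV => (hF𝒱 hV).1
  have hTsub : ∀ n, (⋃ V ∈ F, g V n) ⊆ T := by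
    intro n x hx
    obtain ⟨V, hVF, hxg⟩ := mem_iUnion₂.mp hx
    exact ⟨V, hVF, (hg1 V n).2 hxg⟩
  -- each "slice" is nowhere dense
  have hSnd : ∀ n, IsNowhereDense (⋃ V ∈ F, g V n) := by
    intro n
    set Sn := ⋃ V ∈ F, g V n with hSn
    rw [IsNowhereDense, ← not_nonempty_iff_eq_empty]
    rintro ⟨x, hx⟩
    set O := interior (closure Sn) with hO
    have hOcl : O ⊆ closure T := (interior_subset).trans (closure_mono (hTsub n))
    obtain ⟨y, hyO, hyT⟩ : (O ∩ T).Nonempty :=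
      mem_closure_iff.mp (hOcl hx) O isOpen_interior hx
    obtain ⟨V, hVF, hyV⟩ := hyT
    have hVopen : IsOpen V := (hF𝒱 hVF).1
    have hsub2 : O ∩ V ⊆ closure (g V n) := by
      rintro z ⟨hzO, hzV⟩
      have hz : z ∈ closure Sn := interior_subset hzO
      rw [mem_closure_iff] at hz ⊢
      intro o ho hzo
      obtain ⟨w, ⟨hwo, hwV⟩, hwS⟩ := hz (o ∩ V) (ho.inter hVopen) ⟨hzo, hzV⟩
      obtain ⟨W, hWF, hwg⟩ := mem_iUnion₂.mp hwS
      have hWV : W = V := by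
        by_contra hne
        exact (hFdisj hWF hVF hne).ne_of_mem ((hg1 W n).2 hwg) hwV rfl
      exact ⟨w, hwo, hWV ▸ hwg⟩
    have hOV : O ∩ V ⊆ interior (closure (g V n)) :=
      interior_maximal hsub2 (isOpen_interior.inter hVopen)
    rw [(hg1 V n).1] at hOV
    exact hOV ⟨hyO, hyV⟩
  have hTmeagre : IsMeagre T := by
    have : T ⊆ ⋃ n, ⋃ V ∈ F, g V n := by
      rintro x ⟨V, hVF, hxV⟩
      obtain ⟨_, ⟨m, rfl⟩, hm⟩ := hg2 V hVF hxV
      exact mem_iUnion.mpr ⟨m, mem_iUnion₂.mpr ⟨V, hVF, hm⟩⟩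
    exact (isMeagre_iUnion fun n => aux_nd_meagre (hSnd n)).mono this
  have hfront : IsMeagre (closure T \ T) := by
    apply aux_nd_meagre
    rw [(isClosed_closure.sdiff hTopen).isNowhereDense_iff,
      ← not_nonempty_iff_eq_empty]
    rintro ⟨x, hx⟩
    have hxcl : x ∈ closure T := (interior_subset hx).1
    obtain ⟨y, hyI, hyT⟩ : (interior (closure T \ T) ∩ T).Nonempty :=
      mem_closure_iff.mp hxcl _ isOpen_interior hx
    exact (interior_subset hyI).2 hyT
  have hcover : ⋃₀ 𝒰 ⊆ closure T := by
    rintro x ⟨U, hU𝒰, hxU⟩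
    by_contra hxT
    set W := U \ closure T with hW
    have hWopen : IsOpen W := (h U hU𝒰).1.sdiff isClosed_closure
    have hW𝒱 : W ∈ 𝒱 := ⟨hWopen, ⟨x, hxU, hxT⟩, U, hU𝒰, diff_subset⟩
    have hWdisj : ∀ V ∈ F, Disjoint W V := by
      intro V hVF
      refine Set.disjoint_left.mpr fun z hzW hzV => hzW.2 (subset_closure ⟨V, hVF, hzV⟩)
    have hins : insert W F ∈ S := by
      refine ⟨insert_subset hW𝒱 hF𝒱, ?_⟩
      intro a ha b hb hab
      rcases ha with rfl | ha <;> rcases hb with rfl | hb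
      · exact absurd rfl hab
      · exact hWdisj b hb
      · exact (hWdisj a ha).symm
      · exact hFdisj ha hb hab
    have hWF : W ∈ F := hFmax.2 hins (subset_insert W F) (mem_insert W F)
    obtain ⟨z, hzU, hzT⟩ := hW𝒱.2.1
    exact hzT (subset_closure ⟨W, hWF, hzU, hzT⟩)
  have : ⋃₀ 𝒰 ⊆ T ∪ (closure T \ T) := fun x hx => by
    by_cases hxT : x ∈ T
    · exact Or.inl hxT
    · exact Or.inr ⟨hcover hx, hxT⟩
  exact (aux_meagre_union hTmeagre hfront).mono this

end Banach

/-- (Pettis theorem) Let `G` be a topological group and `A ⊆ G` a set with the Baire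
property (`A = U ∆ P` with `U` open and `P` meager).  If `A` is nonmeager, then
`A⁻¹ * A` contains an open neighborhood of the identity. -/
theorem stmt5 {G : Type*} [Group G] [TopologicalSpace G] [IsTopologicalGroup G]
    (A U P : Set G) (hU : IsOpen U) (hP : IsMeagre P) (hA : A = symmDiff U P)
    (hnm : ¬ IsMeagre A) :
    ∃ V : Set G, IsOpen V ∧ (1 : G) ∈ V ∧ V ⊆ A⁻¹ * A := by
  classical
  have hUA : symmDiff U A = P := by rw [hA, symmDiff_symmDiff_cancel_left]
  have hUdiff : U \ A ⊆ P := by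
    rw [← hUA]; exact fun x hx => Or.inl hx
  have hAdiff : A \ U ⊆ P := by
    rw [← hUA]; exact fun x hx => Or.inr hx
  have hAsub : A ⊆ U ∪ P := by
    intro x hx
    by_cases hxU : x ∈ U
    · exact Or.inl hxU
    · exact Or.inr (hAdiff ⟨hx, hxU⟩)
  have hUnm : ¬ IsMeagre U := fun h => hnm ((aux_meagre_union h hP).mono hAsub)
  -- the union of all open meagre subsets of U
  set 𝒰 : Set (Set G) := {W | IsOpen W ∧ IsMeagre W ∧ W ⊆ U} with h𝒰
  have hM : IsMeagre (⋃₀ 𝒰) := aux_banach_category fun W hW => ⟨hW.1, hW.2.1⟩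
  obtain ⟨x, hxU, hxM⟩ : (U \ ⋃₀ 𝒰).Nonempty := by
    rw [nonempty_iff_ne_empty]
    intro hcon
    exact hUnm (hM.mono (diff_eq_empty.mp hcon))
  refine ⟨(fun y => x * y) ⁻¹' U, hU.preimage (continuous_mul_left x), by simpa using hxU, ?_⟩
  intro g hg
  have hxgU : x * g ∈ U := hg
  set O : Set G := U ∩ ((fun y => y * g) ⁻¹' U) with hO
  have hOopen : IsOpen O := hU.inter (hU.preimage (continuous_mul_right g))
  have hxO : x ∈ O := ⟨hxU, hxgU⟩
  have hOnm : ¬ IsMeagre O := by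
    intro hmeag
    exact hxM ⟨O, ⟨hOopen, hmeag, inter_subset_left⟩, hxO⟩
  have hQ : IsMeagre (P ∪ ((fun y => y * g) ⁻¹' P)) :=
    aux_meagre_union hP
      (hP.preimage_of_isOpenMap (continuous_mul_right g)
        (Homeomorph.mulRight g).isOpenMap)
  obtain ⟨y, hyO, hyQ⟩ : (O \ (P ∪ ((fun y => y * g) ⁻¹' P))).Nonempty := by
    rw [nonempty_iff_ne_empty]
    intro hcon
    exact hOnm (hQ.mono (diff_eq_empty.mp hcon))
  have hyP : y ∉ P := fun h => hyQ (Or.inl h)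
  have hygP : y * g ∉ P := fun h => hyQ (Or.inr h)
  have hyA : y ∈ A := by
    by_contra h
    exact hyP (hUdiff ⟨hyO.1, h⟩)
  have hygA : y * g ∈ A := by
    by_contra h
    exact hygP (hUdiff ⟨hyO.2, h⟩)
  have : y⁻¹ * (y * g) ∈ A⁻¹ * A :=
    Set.mul_mem_mul (Set.inv_mem_inv.mpr hyA) hygA
  simpa using this
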